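/- Let R be a commutative ring, A an n×n matrix over R, B an m×m matrix over R with m ≥ n, and let H be the (n+m)×(n+m) block matrix H = [[A, X],[Y, B]] where X is the n×m matrix with X_{ii} = x_i for i ∈ [n] and zeros elsewhere, and Y is the m×n matrix with Y_{ii} = y_i for i ∈ [n] and zeros elsewhere. Then det(H) = Σ_{S,T ⊆ [n], |S|=|T|} (-1)^{|S|} · det(A_{-S,-T}) · det(B_{-T,-S}) · x^S · y^T, where A_{-S,-T} denotes A with rows in S and columns in T deleted, and x^S = Π_{i∈S} x_i, y^T = Π_{j∈T} y_j. -/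

import Mathlib

open Finset Equiv

namespace BlockDetAux

variable {N : ℕ}

/-- Pack a finset first (in increasing order), then its complement. -/
def pk (U : Finset (Fin N)) {k l : ℕ} (hk : U.card = k) (hl : Uᶜ.card = l) :
    Fin k ⊕ Fin l ≃ Fin N where
  toFun := Sum.elim (fun a => U.orderEmbOfFin hk a) (fun b => Uᶜ.orderEmbOfFin hl b)
  invFun x := if hx : x ∈ U then Sum.inl ((U.orderIsoOfFin hk).symm ⟨x, hx⟩)
    else Sum.inr ((Uᶜ.orderIsoOfFin hl).symm ⟨x, Finset.mem_compl.2 hx⟩)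
  left_inv z := by
    rcases z with a | b
    · simp only [Sum.elim_inl]
      show (if hx : U.orderEmbOfFin hk a ∈ U then _ else _) = _
      rw [dif_pos (Finset.orderEmbOfFin_mem U hk a)]
      congr 1
      have h : (⟨U.orderEmbOfFin hk a, Finset.orderEmbOfFin_mem U hk a⟩ : {x // x ∈ U}) =
          U.orderIsoOfFin hk a := Subtype.ext (by simp)
      rw [h, OrderIso.symm_apply_apply]
    · simp only [Sum.elim_inr]
      show (if hx : Uᶜ.orderEmbOfFin hl b ∈ U then _ else _) = _
      rw [dif_neg (by simpa using (Finset.mem_compl.1 (Finset.orderEmbOfFin_mem Uᶜ hl b)))]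
      congr 1
      have h : (⟨Uᶜ.orderEmbOfFin hl b, Finset.orderEmbOfFin_mem Uᶜ hl b⟩ : {x // x ∈ Uᶜ}) =
          Uᶜ.orderIsoOfFin hl b := Subtype.ext (by simp)
      rw [h, OrderIso.symm_apply_apply]
  right_inv x := by
    by_cases hx : x ∈ U
    · show Sum.elim _ _ (if hx : x ∈ U then _ else _) = x
      rw [dif_pos hx]
      simp only [Sum.elim_inl]
      rw [← Finset.coe_orderIsoOfFin_apply, OrderIso.apply_symm_apply]
    · show Sum.elim _ _ (if hx : x ∈ U then _ else _) = x
      rw [dif_neg hx]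
      simp only [Sum.elim_inr]
      rw [← Finset.coe_orderIsoOfFin_apply, OrderIso.apply_symm_apply]

@[simp] lemma pk_inl (U : Finset (Fin N)) {k l : ℕ} (hk : U.card = k) (hl : Uᶜ.card = l)
    (a : Fin k) : pk U hk hl (Sum.inl a) = U.orderEmbOfFin hk a := rfl

@[simp] lemma pk_inr (U : Finset (Fin N)) {k l : ℕ} (hk : U.card = k) (hl : Uᶜ.card = l)
    (b : Fin l) : pk U hk hl (Sum.inr b) = Uᶜ.orderEmbOfFin hl b := rfl

lemma oe_congr {U V : Finset (Fin N)} (h : U = V) {k : ℕ} (hk : U.card = k) (hk' : V.card = k)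
    (a : Fin k) : U.orderEmbOfFin hk a = V.orderEmbOfFin hk' a := by subst h; rfl


lemma swap_comp_orderEmbOfFin {U : Finset (Fin N)} {u v : Fin N} (hu : u ∈ U) (hv : v ∉ U)
    (hadj : (u : ℕ) = (v : ℕ) + 1 ∨ (v : ℕ) = (u : ℕ) + 1) {k : ℕ} (hk : U.card = k)
    (hk' : (insert v (U.erase u)).card = k) (a : Fin k) :
    (insert v (U.erase u)).orderEmbOfFin hk' a = Equiv.swap u v (U.orderEmbOfFin hk a) := by
  have huv : u ≠ v := by intro h; subst h; exact hv hu
  have hfs : ∀ x : Fin k, Equiv.swap u v (U.orderEmbOfFin hk x) ∈ insert v (U.erase u) := by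
    intro x
    have hm := Finset.orderEmbOfFin_mem U hk x
    by_cases hx : U.orderEmbOfFin hk x = u
    · rw [hx, Equiv.swap_apply_left]; exact Finset.mem_insert_self _ _
    · have hnv : U.orderEmbOfFin hk x ≠ v := fun h => hv (h ▸ hm)
      rw [Equiv.swap_apply_of_ne_of_ne hx hnv]
      exact Finset.mem_insert_of_mem (Finset.mem_erase.2 ⟨hx, hm⟩)
  have hmono : StrictMono (fun x : Fin k => Equiv.swap u v (U.orderEmbOfFin hk x)) := by
    intro a b hab
    have hord := (U.orderEmbOfFin hk).strictMono hab
    set fa := U.orderEmbOfFin hk a with hfa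
    set fb := U.orderEmbOfFin hk b with hfb
    have hma : fa ∈ U := Finset.orderEmbOfFin_mem U hk a
    have hmb : fb ∈ U := Finset.orderEmbOfFin_mem U hk b
    have hav : fa ≠ v := fun h => hv (h ▸ hma)
    have hbv : fb ≠ v := fun h => hv (h ▸ hmb)
    show Equiv.swap u v fa < Equiv.swap u v fb
    by_cases hau : fa = u
    · have hbu : fb ≠ u := by intro h; rw [hau, h] at hord; exact lt_irrefl _ hord
      rw [hau, Equiv.swap_apply_left, Equiv.swap_apply_of_ne_of_ne hbu hbv]
      rw [Fin.lt_def] at hord ⊢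
      rcases hadj with h | h
      · omega
      · have : (fb : ℕ) ≠ (v : ℕ) := fun hh => hbv (Fin.ext hh)
        rw [hau] at hord; omega
    · by_cases hbu : fb = u
      · rw [hbu, Equiv.swap_apply_left, Equiv.swap_apply_of_ne_of_ne hau hav]
        rw [Fin.lt_def] at hord ⊢
        rcases hadj with h | h
        · have : (fa : ℕ) ≠ (v : ℕ) := fun hh => hav (Fin.ext hh)
          rw [hbu] at hord; omega
        · rw [hbu] at hord; omega
      · rw [Equiv.swap_apply_of_ne_of_ne hau hav, Equiv.swap_apply_of_ne_of_ne hbu hbv]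
        exact hord
  exact (congrFun (funext_iff.2 fun x =>
    congrFun (Finset.orderEmbOfFin_unique hk' hfs hmono) x) a).symm

lemma compl_move {U : Finset (Fin N)} {u v : Fin N} (hu : u ∈ U) (hv : v ∉ U) :
    (insert v (U.erase u))ᶜ = insert u (Uᶜ.erase v) := by
  have huv : u ≠ v := by intro h; subst h; exact hv hu
  ext x
  simp only [Finset.mem_compl, Finset.mem_insert, Finset.mem_erase]
  constructor
  · intro h
    push_neg at h
    by_cases hx : x = u
    · exact Or.inl hx
    · exact Or.inr ⟨h.1, fun hxU => (h.2 hx) hxU⟩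
  · rintro (rfl | ⟨hxv, hxU⟩) h
    · rcases h with h | h
      · exact huv h
      · exact h.1 rfl
    · rcases h with h | h
      · exact hxv h
      · exact hxU h.2

lemma pk_move {U : Finset (Fin N)} {u v : Fin N} (hu : u ∈ U) (hv : v ∉ U)
    (hadj : (u : ℕ) = (v : ℕ) + 1 ∨ (v : ℕ) = (u : ℕ) + 1) {k l : ℕ}
    (hk : U.card = k) (hl : Uᶜ.card = l)
    (hk' : (insert v (U.erase u)).card = k) (hl' : (insert v (U.erase u))ᶜ.card = l)
    (z : Fin k ⊕ Fin l) :
    pk (insert v (U.erase u)) hk' hl' z = Equiv.swap u v (pk U hk hl z) := by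
  rcases z with a | b
  · exact swap_comp_orderEmbOfFin hu hv hadj hk hk' a
  · simp only [pk_inr]
    have hc : (insert v (U.erase u))ᶜ = insert u (Uᶜ.erase v) := compl_move hu hv
    have hvc : v ∈ Uᶜ := Finset.mem_compl.2 hv
    have huc : u ∉ Uᶜ := fun h => (Finset.mem_compl.1 h) hu
    rw [oe_congr hc hl' (by rw [← hc]; exact hl')]
    rw [swap_comp_orderEmbOfFin hvc huc (Or.symm hadj) hl (by rw [← hc]; exact hl') b]
    rw [Equiv.swap_comm]

lemma sign_pk_trans_move {U : Finset (Fin N)} {u v : Fin N} (hu : u ∈ U) (hv : v ∉ U)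
    (hadj : (u : ℕ) = (v : ℕ) + 1 ∨ (v : ℕ) = (u : ℕ) + 1) {k l : ℕ}
    (hk : U.card = k) (hl : Uᶜ.card = l)
    (hk' : (insert v (U.erase u)).card = k) (hl' : (insert v (U.erase u))ᶜ.card = l)
    (e : Fin k ⊕ Fin l ≃ Fin N) :
    Equiv.Perm.sign ((pk (insert v (U.erase u)) hk' hl').trans e.symm) =
      - Equiv.Perm.sign ((pk U hk hl).trans e.symm) := by
  have huv : u ≠ v := by intro h; subst h; exact hv hu
  have key : (pk (insert v (U.erase u)) hk' hl').trans e.symm =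
      ((pk U hk hl).trans e.symm).trans (Equiv.permCongr e.symm (Equiv.swap u v)) := by
    ext z
    simp only [Equiv.trans_apply, Equiv.permCongr_apply, Equiv.symm_symm,
      Equiv.apply_symm_apply, pk_move hu hv hadj hk hl hk' hl' z]
  rw [key, ← Equiv.Perm.mul_def, map_mul, Equiv.Perm.sign_permCongr,
    Equiv.Perm.sign_swap huv]
  exact neg_one_mul _

lemma pk_congr {N : ℕ} {U V : Finset (Fin N)} (h : U = V) {k l : ℕ}
    (hk : U.card = k) (hl : Uᶜ.card = l) (hk' : V.card = k) (hl' : Vᶜ.card = l) :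
    pk U hk hl = pk V hk' hl' := by subst h; rfl

lemma mem_C {n k : ℕ} (hkn : k ≤ n) (i : Fin n) :
    i ∈ (Finset.univ : Finset (Fin k)).map (Fin.castLEEmb hkn) ↔ (i : ℕ) < k := by
  constructor
  · rintro h
    obtain ⟨a, -, rfl⟩ := Finset.mem_map.1 h
    simpa using a.2
  · intro h
    exact Finset.mem_map.2 ⟨⟨(i : ℕ), h⟩, Finset.mem_univ _, by simp [Fin.ext_iff]⟩

lemma gma_const {n m k : ℕ} (hnm : n ≤ m) (hkn : k ≤ n)
    (ρ1 : Fin (n - k) ⊕ Fin k ≃ Fin n) (ρ2 : Fin k ⊕ Fin (m - k) ≃ Fin m) :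
    ∀ (s : ℕ) (U : Finset (Fin n)) (hU : U.card = k), (∑ u ∈ U, (u : ℕ)) = s →
      Equiv.Perm.sign ((pk Uᶜ (by simp [Finset.card_compl, hU]) (by simp [hU])).trans
          ρ1.symm) *
        Equiv.Perm.sign ((pk (U.map (Fin.castLEEmb hnm))
          (by simp [hU]) (by simp [Finset.card_compl, hU])).trans ρ2.symm) =
      Equiv.Perm.sign ((pk ((Finset.univ.map (Fin.castLEEmb hkn)))ᶜ
          (by simp [Finset.card_compl]) (by simp)).trans ρ1.symm) *
        Equiv.Perm.sign ((pk (((Finset.univ : Finset (Fin k)).map (Fin.castLEEmb hkn)).map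
            (Fin.castLEEmb hnm))
          (by simp) (by simp [Finset.card_compl])).trans ρ2.symm) := by
  intro s
  induction s using Nat.strong_induction_on with
  | _ s ih =>
  intro U hU hsum
  by_cases hex : ∃ u, u ∈ U ∧ (u : ℕ) ≠ 0 ∧ ∀ w : Fin n, (w : ℕ) + 1 = (u : ℕ) → w ∉ U
  · obtain ⟨u, hu, hu0, hw⟩ := hex
    have hun : (u : ℕ) < n := u.2
    set v : Fin n := ⟨(u : ℕ) - 1, by omega⟩ with hvdef
    have hvu : (v : ℕ) + 1 = (u : ℕ) := by simp [hvdef]; omega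
    have hvU : v ∉ U := hw v hvu
    have huv : u ≠ v := by intro h; rw [h] at hu; exact hvU hu
    have hne : v ∉ U.erase u := fun h => hvU (Finset.mem_of_mem_erase h)
    have hkpos : 0 < k := by rw [← hU]; exact Finset.card_pos.2 ⟨u, hu⟩
    have hVcard : (insert v (U.erase u)).card = k := by
      rw [Finset.card_insert_of_notMem hne, Finset.card_erase_of_mem hu, hU]
      omega
    have hVsum : (∑ w ∈ insert v (U.erase u), (w : ℕ)) < s := by
      rw [Finset.sum_insert hne]
      have h2 : (∑ w ∈ U.erase u, (w : ℕ)) + (u : ℕ) = ∑ w ∈ U, (w : ℕ) :=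
        Finset.sum_erase_add U _ hu
      have hv1 : (v : ℕ) < (u : ℕ) := by omega
      omega
    have hrec := ih _ hVsum (insert v (U.erase u)) hVcard rfl
    rw [← hrec]
    have e1 : ∀ (p1 : ((insert v (U.erase u))ᶜ).card = n - k)
        (p2 : (((insert v (U.erase u))ᶜ)ᶜ).card = k)
        (q1 : (Uᶜ).card = n - k) (q2 : ((Uᶜ)ᶜ).card = k),
        Equiv.Perm.sign ((pk (insert v (U.erase u))ᶜ p1 p2).trans ρ1.symm) =
          - Equiv.Perm.sign ((pk Uᶜ q1 q2).trans ρ1.symm) := by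
      intro p1 p2 q1 q2
      rw [pk_congr (compl_move hu hvU) p1 p2 (by rw [← compl_move hu hvU]; exact p1)
        (by rw [← compl_move hu hvU]; exact p2)]
      exact sign_pk_trans_move (Finset.mem_compl.2 hvU)
        (fun h => (Finset.mem_compl.1 h) hu) (Or.inr hvu.symm) q1 q2 _ _ ρ1
    have e2 : ∀ (p1 : ((insert v (U.erase u)).map (Fin.castLEEmb hnm)).card = k)
        (p2 : (((insert v (U.erase u)).map (Fin.castLEEmb hnm))ᶜ).card = m - k)
        (q1 : (U.map (Fin.castLEEmb hnm)).card = k)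
        (q2 : ((U.map (Fin.castLEEmb hnm))ᶜ).card = m - k),
        Equiv.Perm.sign ((pk ((insert v (U.erase u)).map (Fin.castLEEmb hnm)) p1 p2).trans
            ρ2.symm) =
          - Equiv.Perm.sign ((pk (U.map (Fin.castLEEmb hnm)) q1 q2).trans ρ2.symm) := by
      intro p1 p2 q1 q2
      have hmap : (insert v (U.erase u)).map (Fin.castLEEmb hnm) =
          insert (Fin.castLEEmb hnm v) ((U.map (Fin.castLEEmb hnm)).erase
            (Fin.castLEEmb hnm u)) := by
        rw [Finset.map_insert, Finset.map_erase]
      have humem : Fin.castLEEmb hnm u ∈ U.map (Fin.castLEEmb hnm) :=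
        Finset.mem_map_of_mem _ hu
      have hvmem : Fin.castLEEmb hnm v ∉ U.map (Fin.castLEEmb hnm) := by
        intro h
        obtain ⟨w, hwU, hweq⟩ := Finset.mem_map.1 h
        rw [(Fin.castLEEmb hnm).injective hweq] at hwU
        exact hvU hwU
      rw [pk_congr hmap p1 p2 (by rw [← hmap]; exact p1) (by rw [← hmap]; exact p2)]
      exact sign_pk_trans_move humem hvmem (Or.inl (by simpa using hvu.symm)) q1 q2 _ _ ρ2
    rw [e1 _ _ (by simp [Finset.card_compl, hU]) (by simp [hU]),
      e2 _ _ (by simp [hU]) (by simp [Finset.card_compl, hU]), neg_mul_neg]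
  · push_neg at hex
    have down : ∀ (c : ℕ) (i : Fin n), i ∈ U → ∀ j : Fin n, (j : ℕ) + c = (i : ℕ) → j ∈ U := by
      intro c
      induction c with
      | zero =>
        intro i hi j hj
        have : j = i := Fin.ext (by omega)
        rwa [this]
      | succ c ihc =>
        intro i hi j hj
        obtain ⟨w, hw1, hwU⟩ := hex i hi (by omega)
        exact ihc w hwU j (by omega)
    have hUC : U = (Finset.univ : Finset (Fin k)).map (Fin.castLEEmb hkn) := by
      ext i
      rw [mem_C hkn]
      constructor
      · intro hi
        by_contra hik
        push_neg at hik
        have hsub : Finset.Iic i ⊆ U := by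
          intro a ha
          rw [Finset.mem_Iic] at ha
          exact down ((i : ℕ) - (a : ℕ)) i hi a (by rw [Fin.le_def] at ha; omega)
        have := Finset.card_le_card hsub
        rw [Fin.card_Iic, hU] at this
        omega
      · intro hik
        by_contra hiU
        have hlt : U ⊆ Finset.Iio i := by
          intro a ha
          rw [Finset.mem_Iio]
          by_contra hge
          push_neg at hge
          exact hiU (down ((a : ℕ) - (i : ℕ)) a ha i (by rw [Fin.le_def] at hge; omega))
        have := Finset.card_le_card hlt
        rw [Fin.card_Iio, hU] at this
        omega
    subst hUC
    rfl
open Fin.NatCast in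
lemma finRotate_pow_apply (M j : ℕ) (x : Fin (M + 1)) :
    ((finRotate (M + 1)) ^ j) x = x + (j : Fin (M + 1)) := by
  induction j with
  | zero => simp
  | succ j ihj =>
    rw [pow_succ', Equiv.Perm.mul_apply, ihj, finRotate_succ_apply]
    have : ((j + 1 : ℕ) : Fin (M + 1)) = (j : Fin (M + 1)) + 1 := by
      push_cast; ring
    rw [this, add_assoc]

open Fin.NatCast in
lemma sign_sumComm_self (b : ℕ) :
    Equiv.Perm.sign (Equiv.sumComm (Fin b) (Fin b)) = (-1) ^ b := by
  rcases Nat.eq_zero_or_pos b with hb | hb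
  · subst hb
    have : (Equiv.sumComm (Fin 0) (Fin 0)) = Equiv.refl _ := by
      ext z; rcases z with z | z <;> exact z.elim0
    simp [this]
  · obtain ⟨d, rfl⟩ : ∃ d, b = d + 1 := ⟨b - 1, by omega⟩
    set b := d + 1
    have hsum : b + b = (b + d) + 1 := by omega
    have key : Equiv.Perm.sign (Equiv.sumComm (Fin b) (Fin b)) =
        Equiv.Perm.sign ((finRotate (b + d + 1)) ^ b) := by
      apply Equiv.Perm.sign_eq_sign_of_equiv _ _
        (finSumFinEquiv.trans (finCongr hsum))
      intro z
      rcases z with i | i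
      · simp only [Equiv.sumComm_apply, Sum.swap_inl, Equiv.trans_apply,
          finSumFinEquiv_apply_right, finSumFinEquiv_apply_left, finCongr_apply,
          finRotate_pow_apply]
        apply Fin.ext
        simp only [Fin.coe_cast, Fin.natAdd_mk, Fin.val_add, Fin.val_natCast,
          Fin.coe_castAdd]
        have h1 : (b : ℕ) % (b + d + 1) = b := Nat.mod_eq_of_lt (by omega)
        rw [h1, Nat.mod_eq_of_lt (by omega)]
        simp [Fin.natAdd]
        omega
      · simp only [Equiv.sumComm_apply, Sum.swap_inr, Equiv.trans_apply,
          finSumFinEquiv_apply_right, finSumFinEquiv_apply_left, finCongr_apply,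
          finRotate_pow_apply]
        apply Fin.ext
        simp only [Fin.coe_cast, Fin.val_add, Fin.val_natCast, Fin.coe_castAdd,
          Fin.coe_natAdd]
        have h1 : (b : ℕ) % (b + d + 1) = b := Nat.mod_eq_of_lt (by omega)
        rw [h1]
        have hi : (i : ℕ) < b := i.2
        have h2 : (b + (i : ℕ) + b) = (i : ℕ) + (b + d + 1) := by omega
        rw [h2, Nat.add_mod_right, Nat.mod_eq_of_lt (by omega)]
    rw [key, map_pow, sign_finRotate]
    have hodd : Odd (b + d) := ⟨d, by omega⟩
    rw [Nat.add_sub_cancel, hodd.neg_one_pow]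

def midSwap (a b c : ℕ) : Equiv.Perm ((Fin a ⊕ Fin b) ⊕ (Fin b ⊕ Fin c)) where
  toFun z := match z with
    | .inl (.inl x) => .inl (.inl x)
    | .inl (.inr x) => .inr (.inl x)
    | .inr (.inl x) => .inl (.inr x)
    | .inr (.inr x) => .inr (.inr x)
  invFun z := match z with
    | .inl (.inl x) => .inl (.inl x)
    | .inl (.inr x) => .inr (.inl x)
    | .inr (.inl x) => .inl (.inr x)
    | .inr (.inr x) => .inr (.inr x)
  left_inv z := by rcases z with (x | x) | (x | x) <;> rfl
  right_inv z := by rcases z with (x | x) | (x | x) <;> rfl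

/-- structural equiv used to compute the sign of `midSwap`. -/
def midAssoc (a b c : ℕ) : (Fin a ⊕ Fin b) ⊕ (Fin b ⊕ Fin c) ≃ Fin a ⊕ ((Fin b ⊕ Fin b) ⊕ Fin c) where
  toFun z := match z with
    | .inl (.inl x) => .inl x
    | .inl (.inr x) => .inr (.inl (.inl x))
    | .inr (.inl x) => .inr (.inl (.inr x))
    | .inr (.inr x) => .inr (.inr x)
  invFun z := match z with
    | .inl x => .inl (.inl x)
    | .inr (.inl (.inl x)) => .inl (.inr x)
    | .inr (.inl (.inr x)) => .inr (.inl x)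
    | .inr (.inr x) => .inr (.inr x)
  left_inv z := by rcases z with (x | x) | (x | x) <;> rfl
  right_inv z := by rcases z with x | ((x | x) | x) <;> rfl

lemma sign_midSwap (a b c : ℕ) : Equiv.Perm.sign (midSwap a b c) = (-1) ^ b := by
  have key : midSwap a b c = Equiv.permCongr (midAssoc a b c).symm
      (Equiv.sumCongr (Equiv.refl (Fin a))
        (Equiv.sumCongr (Equiv.sumComm (Fin b) (Fin b)) (Equiv.refl (Fin c)))) := by
    ext z
    rcases z with (x | x) | (x | x) <;> rfl
  rw [key, Equiv.Perm.sign_permCongr, Equiv.Perm.sign_sumCongr,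
    Equiv.Perm.sign_sumCongr, sign_sumComm_self]
  simp

lemma sign_split {α β : Type*} [DecidableEq β] [Fintype β] (f g e : β ≃ α) :
    Equiv.Perm.sign (f.trans g.symm) =
      Equiv.Perm.sign (g.trans e.symm) * Equiv.Perm.sign (f.trans e.symm) := by
  have key : f.trans g.symm = (f.trans e.symm).trans ((g.trans e.symm).symm) := by
    ext z; simp
  rw [key, ← Equiv.Perm.mul_def, map_mul, Equiv.Perm.sign_symm]

lemma sign_combo {n m k : ℕ} (hnm : n ≤ m) (S T : Finset (Fin n))
    (hS : S.card = k) (hT : T.card = k)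
    (h1 : Sᶜ.card = n - k) (h1' : Sᶜᶜ.card = k) (h2 : Tᶜ.card = n - k) (h2' : Tᶜᶜ.card = k)
    (h3 : (T.map (Fin.castLEEmb hnm)).card = k)
    (h3' : ((T.map (Fin.castLEEmb hnm))ᶜ).card = m - k)
    (h4 : (S.map (Fin.castLEEmb hnm)).card = k)
    (h4' : ((S.map (Fin.castLEEmb hnm))ᶜ).card = m - k) :
    Equiv.Perm.sign ((pk Tᶜ h2 h2').trans (pk Sᶜ h1 h1').symm) *
      Equiv.Perm.sign ((pk (S.map (Fin.castLEEmb hnm)) h4 h4').trans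
        (pk (T.map (Fin.castLEEmb hnm)) h3 h3').symm) = 1 := by
  have hkn : k ≤ n := by
    rw [← hS]
    simpa using Finset.card_le_univ S
  set C : Finset (Fin n) := (Finset.univ : Finset (Fin k)).map (Fin.castLEEmb hkn) with hC
  have ρ1 : Fin (n - k) ⊕ Fin k ≃ Fin n :=
    pk Cᶜ (by simp [Finset.card_compl, hC]) (by simp [hC])
  have ρ2 : Fin k ⊕ Fin (m - k) ≃ Fin m :=
    pk (C.map (Fin.castLEEmb hnm)) (by simp [hC]) (by simp [Finset.card_compl, hC])
  have γS := gma_const hnm hkn ρ1 ρ2 _ S hS rfl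
  have γT := gma_const hnm hkn ρ1 ρ2 _ T hT rfl
  rw [sign_split _ _ ρ1, sign_split _ _ ρ2,
    mul_comm (Equiv.Perm.sign ((pk (T.map (Fin.castLEEmb hnm)) h3 h3').trans ρ2.symm))
      (Equiv.Perm.sign ((pk (S.map (Fin.castLEEmb hnm)) h4 h4').trans ρ2.symm)),
    mul_mul_mul_comm, γS, γT]
  exact Int.units_mul_self _

lemma orderEmbOfFin_map_castLE {n m k : ℕ} (hnm : n ≤ m) (U : Finset (Fin n))
    (hU : U.card = k) (hU' : (U.map (Fin.castLEEmb hnm)).card = k) (a : Fin k) :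
    (U.map (Fin.castLEEmb hnm)).orderEmbOfFin hU' a =
      Fin.castLE hnm (U.orderEmbOfFin hU a) := by
  have h := Finset.orderEmbOfFin_unique hU'
    (f := fun x => Fin.castLE hnm (U.orderEmbOfFin hU x))
    (fun x => Finset.mem_map.2 ⟨_, Finset.orderEmbOfFin_mem U hU x, rfl⟩)
    ((Fin.strictMono_castLE hnm).comp (U.orderEmbOfFin hU).strictMono)
  exact (congrFun h a).symm

variable {R : Type*} [CommRing R]

/-- The 0/1-bordered matrix appearing in the expansion. -/
def NN {n m : ℕ} (A : Matrix (Fin n) (Fin n) R) (B : Matrix (Fin m) (Fin m) R)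
    (S T : Finset (Fin n)) : Matrix (Fin n ⊕ Fin m) (Fin n ⊕ Fin m) R :=
  Matrix.of fun p q =>
    match p, q with
    | Sum.inl i, Sum.inl j => if i ∈ S ∨ j ∈ T then 0 else A i j
    | Sum.inl i, Sum.inr kk => if i ∈ S ∧ (i : ℕ) = (kk : ℕ) then 1 else 0
    | Sum.inr kk, Sum.inl j => if j ∈ T ∧ (j : ℕ) = (kk : ℕ) then 1 else 0
    | Sum.inr kk, Sum.inr ll => B kk ll

lemma NN_ll {n m : ℕ} (A : Matrix (Fin n) (Fin n) R) (B : Matrix (Fin m) (Fin m) R)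
    (S T : Finset (Fin n)) (i j : Fin n) :
    NN A B S T (Sum.inl i) (Sum.inl j) = if i ∈ S ∨ j ∈ T then 0 else A i j := rfl

lemma NN_lr {n m : ℕ} (A : Matrix (Fin n) (Fin n) R) (B : Matrix (Fin m) (Fin m) R)
    (S T : Finset (Fin n)) (i : Fin n) (kk : Fin m) :
    NN A B S T (Sum.inl i) (Sum.inr kk) = if i ∈ S ∧ (i : ℕ) = (kk : ℕ) then 1 else 0 := rfl

lemma NN_rl {n m : ℕ} (A : Matrix (Fin n) (Fin n) R) (B : Matrix (Fin m) (Fin m) R)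
    (S T : Finset (Fin n)) (kk : Fin m) (j : Fin n) :
    NN A B S T (Sum.inr kk) (Sum.inl j) = if j ∈ T ∧ (j : ℕ) = (kk : ℕ) then 1 else 0 := rfl

lemma NN_rr {n m : ℕ} (A : Matrix (Fin n) (Fin n) R) (B : Matrix (Fin m) (Fin m) R)
    (S T : Finset (Fin n)) (kk ll : Fin m) :
    NN A B S T (Sum.inr kk) (Sum.inr ll) = B kk ll := rfl

lemma det_NN_zero {n m : ℕ} (hnm : n ≤ m)
    (A : Matrix (Fin n) (Fin n) R) (B : Matrix (Fin m) (Fin m) R)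
    {S T : Finset (Fin n)} (hne : S.card ≠ T.card) :
    (NN A B S T).det = 0 := by
  rw [Matrix.det_apply]
  apply Finset.sum_eq_zero
  intro σ _
  rcases eq_or_ne (∏ c, NN A B S T (σ c) c) 0 with hp | hp
  · rw [hp, smul_zero]
  exfalso
  have hfac : ∀ c, NN A B S T (σ c) c ≠ 0 := by
    intro c hc
    exact hp (Finset.prod_eq_zero (Finset.mem_univ c) hc)
  have fT : ∀ j : Fin n, j ∈ T → ∃ kk : Fin m, σ (Sum.inl j) = Sum.inr kk := by
    intro j hj
    rcases hσ : σ (Sum.inl j) with i | kk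
    · exfalso
      have h := hfac (Sum.inl j)
      rw [hσ, NN_ll, if_pos (Or.inr hj)] at h
      exact h rfl
    · exact ⟨kk, rfl⟩
  have fS' : ∀ kk : Fin m, kk ∉ S.map (Fin.castLEEmb hnm) →
      ∃ ll, σ (Sum.inr kk) = Sum.inr ll := by
    intro kk hkk
    rcases hσ : σ (Sum.inr kk) with i | ll
    · exfalso
      have h := hfac (Sum.inr kk)
      rw [hσ, NN_lr, if_neg] at h
      · exact h rfl
      · rintro ⟨hiS, hival⟩
        exact hkk (Finset.mem_map.2 ⟨i, hiS, Fin.ext (by simpa using hival)⟩)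
    · exact ⟨ll, rfl⟩
  have fS : ∀ i : Fin n, i ∈ S → ∃ kk : Fin m, σ.symm (Sum.inl i) = Sum.inr kk := by
    intro i hi
    rcases hσ : σ.symm (Sum.inl i) with j | kk
    · exfalso
      have hσ' : σ (Sum.inl j) = Sum.inl i := by
        rw [← hσ, Equiv.apply_symm_apply]
      have h := hfac (Sum.inl j)
      rw [hσ', NN_ll, if_pos (Or.inl hi)] at h
      exact h rfl
    · exact ⟨kk, rfl⟩
  have fT' : ∀ kk : Fin m, kk ∉ T.map (Fin.castLEEmb hnm) →
      ∃ ll, σ.symm (Sum.inr kk) = Sum.inr ll := by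
    intro kk hkk
    rcases hσ : σ.symm (Sum.inr kk) with j | ll
    · exfalso
      have hσ' : σ (Sum.inl j) = Sum.inr kk := by
        rw [← hσ, Equiv.apply_symm_apply]
      have h := hfac (Sum.inl j)
      rw [hσ', NN_rl, if_neg] at h
      · exact h rfl
      · rintro ⟨hjT, hjval⟩
        exact hkk (Finset.mem_map.2 ⟨j, hjT, Fin.ext (by simpa using hjval)⟩)
    · exact ⟨ll, rfl⟩
  have hSm : S.card ≤ m := le_trans (by simpa using Finset.card_le_univ S) hnm
  have hTm : T.card ≤ m := le_trans (by simpa using Finset.card_le_univ T) hnm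
  have hdisj : ∀ (W : Finset (Fin n)) (W' : Finset (Fin m)),
      Disjoint (W.map (Function.Embedding.inl (β := Fin m)))
        (W'.map (Function.Embedding.inr (α := Fin n))) := by
    intro W W'
    rw [Finset.disjoint_left]
    rintro a ha hb
    obtain ⟨w, -, rfl⟩ := Finset.mem_map.1 ha
    obtain ⟨w', -, h⟩ := Finset.mem_map.1 hb
    exact absurd h (by simp)
  -- first count : |T| ≤ |S|
  have hc1 : T.card + (m - S.card) ≤ m := by
    have hinj := Finset.card_le_card_of_injOn (⇑σ)
      (s := (T.map (Function.Embedding.inl)) ∪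
        (((S.map (Fin.castLEEmb hnm))ᶜ).map (Function.Embedding.inr)))
      (t := (Finset.univ : Finset (Fin m)).map (Function.Embedding.inr))
      (by
        intro c hc
        rcases Finset.mem_union.1 hc with hc | hc
        · obtain ⟨jj, hj, rfl⟩ := Finset.mem_map.1 hc
          obtain ⟨kk, hkk⟩ := fT jj hj
          rw [Function.Embedding.inl_apply, hkk]
          exact Finset.mem_map.2 ⟨kk, Finset.mem_univ _, rfl⟩
        · obtain ⟨kk, hk, rfl⟩ := Finset.mem_map.1 hc
          obtain ⟨ll, hll⟩ := fS' kk (by simpa using hk)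
          rw [Function.Embedding.inr_apply, hll]
          exact Finset.mem_map.2 ⟨ll, Finset.mem_univ _, rfl⟩)
      (σ.injective.injOn)
    rwa [Finset.card_union_of_disjoint (hdisj _ _), Finset.card_map, Finset.card_map,
      Finset.card_compl, Finset.card_map, Finset.card_map, Fintype.card_fin,
      Finset.card_univ, Fintype.card_fin] at hinj
  -- second count : |S| ≤ |T|
  have hc2 : S.card + (m - T.card) ≤ m := by
    have hinj := Finset.card_le_card_of_injOn (⇑σ.symm)
      (s := (S.map (Function.Embedding.inl)) ∪
        (((T.map (Fin.castLEEmb hnm))ᶜ).map (Function.Embedding.inr)))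
      (t := (Finset.univ : Finset (Fin m)).map (Function.Embedding.inr))
      (by
        intro c hc
        rcases Finset.mem_union.1 hc with hc | hc
        · obtain ⟨ii, hi, rfl⟩ := Finset.mem_map.1 hc
          obtain ⟨kk, hkk⟩ := fS ii hi
          rw [Function.Embedding.inl_apply, hkk]
          exact Finset.mem_map.2 ⟨kk, Finset.mem_univ _, rfl⟩
        · obtain ⟨kk, hk, rfl⟩ := Finset.mem_map.1 hc
          obtain ⟨ll, hll⟩ := fT' kk (by simpa using hk)
          rw [Function.Embedding.inr_apply, hll]
          exact Finset.mem_map.2 ⟨ll, Finset.mem_univ _, rfl⟩)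
      (σ.symm.injective.injOn)
    rwa [Finset.card_union_of_disjoint (hdisj _ _), Finset.card_map, Finset.card_map,
      Finset.card_compl, Finset.card_map, Finset.card_map, Fintype.card_fin,
      Finset.card_univ, Fintype.card_fin] at hinj
  omega

lemma det_NN_eq {n m : ℕ} (hnm : n ≤ m)
    (A : Matrix (Fin n) (Fin n) R) (B : Matrix (Fin m) (Fin m) R)
    (S T : Finset (Fin n)) {k l j : ℕ}
    (hS : S.card = k) (hT : T.card = k) (h1 : Sᶜ.card = l) (h2 : Tᶜ.card = l)
    (h3 : ((T.map (Fin.castLEEmb hnm))ᶜ).card = j)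
    (h4 : ((S.map (Fin.castLEEmb hnm))ᶜ).card = j) :
    (NN A B S T).det = (-1 : R) ^ k *
      (A.submatrix (Sᶜ.orderEmbOfFin h1) (Tᶜ.orderEmbOfFin h2)).det *
      (B.submatrix ((T.map (Fin.castLEEmb hnm))ᶜ.orderEmbOfFin h3)
        ((S.map (Fin.castLEEmb hnm))ᶜ.orderEmbOfFin h4)).det := by
  have hkn : k ≤ n := by rw [← hS]; simpa using Finset.card_le_univ S
  have hl : l = n - k := by rw [← h1, Finset.card_compl, Fintype.card_fin, hS]
  subst hl
  have hj : j = m - k := by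
    rw [← h3, Finset.card_compl, Fintype.card_fin, Finset.card_map, hT]
  subst hj
  have h1' : Sᶜᶜ.card = k := by simp [hS]
  have h2' : Tᶜᶜ.card = k := by simp [hT]
  have hSt : (S.map (Fin.castLEEmb hnm)).card = k := by simp [hS]
  have hTt : (T.map (Fin.castLEEmb hnm)).card = k := by simp [hT]
  set A' := A.submatrix (Sᶜ.orderEmbOfFin h1) (Tᶜ.orderEmbOfFin h2) with hA'
  set B' := B.submatrix ((T.map (Fin.castLEEmb hnm))ᶜ.orderEmbOfFin h3)
    ((S.map (Fin.castLEEmb hnm))ᶜ.orderEmbOfFin h4) with hB'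
  set B1 := B.submatrix ((T.map (Fin.castLEEmb hnm)).orderEmbOfFin hTt)
    ((S.map (Fin.castLEEmb hnm)).orderEmbOfFin hSt) with hB1
  set B2 := B.submatrix ((T.map (Fin.castLEEmb hnm))ᶜ.orderEmbOfFin h3)
    ((S.map (Fin.castLEEmb hnm)).orderEmbOfFin hSt) with hB2
  set B3 := B.submatrix ((T.map (Fin.castLEEmb hnm)).orderEmbOfFin hTt)
    ((S.map (Fin.castLEEmb hnm))ᶜ.orderEmbOfFin h4) with hB3
  set eRow : (Fin (n - k) ⊕ Fin k) ⊕ (Fin k ⊕ Fin (m - k)) ≃ Fin n ⊕ Fin m :=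
    Equiv.sumCongr (pk Sᶜ h1 h1') (pk (T.map (Fin.castLEEmb hnm)) hTt h3) with heRow
  set eColPack : (Fin (n - k) ⊕ Fin k) ⊕ (Fin k ⊕ Fin (m - k)) ≃ Fin n ⊕ Fin m :=
    Equiv.sumCongr (pk Tᶜ h2 h2') (pk (S.map (Fin.castLEEmb hnm)) hSt h4) with heColPack
  set eCol : (Fin (n - k) ⊕ Fin k) ⊕ (Fin k ⊕ Fin (m - k)) ≃ Fin n ⊕ Fin m :=
    (midSwap (n - k) k (m - k)).trans eColPack with heCol
  have key1 : (NN A B S T).submatrix eRow eCol =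
      Matrix.fromBlocks (Matrix.fromBlocks A' 0 0 1) 0
        (Matrix.fromBlocks 0 B1 0 B2) (Matrix.fromBlocks 1 B3 0 B') := by
    have hScm : ∀ a, Sᶜ.orderEmbOfFin h1 a ∉ S := fun a =>
      Finset.mem_compl.1 (Finset.orderEmbOfFin_mem _ h1 a)
    have hTcm : ∀ a, Tᶜ.orderEmbOfFin h2 a ∉ T := fun a =>
      Finset.mem_compl.1 (Finset.orderEmbOfFin_mem _ h2 a)
    have hSm : ∀ b, Sᶜᶜ.orderEmbOfFin h1' b ∈ S := by
      intro b; have := Finset.orderEmbOfFin_mem Sᶜᶜ h1' b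
      simpa only [Finset.mem_compl, not_not] using this
    have hTm : ∀ b, Tᶜᶜ.orderEmbOfFin h2' b ∈ T := by
      intro b; have := Finset.orderEmbOfFin_mem Tᶜᶜ h2' b
      simpa only [Finset.mem_compl, not_not] using this
    ext p q
    rcases p with (a | b) | (c | d) <;> rcases q with (a' | b') | (c' | d') <;>
      simp only [Matrix.submatrix_apply, heRow, heCol, heColPack, Equiv.trans_apply,
        Equiv.sumCongr_apply, Sum.map_inl, Sum.map_inr, midSwap, Equiv.coe_fn_mk,
        pk_inl, pk_inr, Matrix.fromBlocks_apply₁₁, Matrix.fromBlocks_apply₁₂,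
        Matrix.fromBlocks_apply₂₁, Matrix.fromBlocks_apply₂₂, Matrix.zero_apply,
        NN_ll, NN_lr, NN_rl, NN_rr]
    -- (1,1)
    · rw [if_neg]
      · rfl
      · rintro (h | h)
        · exact hScm a h
        · exact hTcm a' h
    -- (1,2)
    · rw [if_neg]
      rintro ⟨h, -⟩
      exact hScm a h
    -- (1,3)
    · rw [if_pos (Or.inr (hTm c'))]
    -- (1,4)
    · rw [if_neg]
      rintro ⟨h, -⟩
      exact hScm a h
    -- (2,1)
    · rw [if_pos (Or.inl (hSm b))]
    -- (2,2)
    · rw [oe_congr (compl_compl S) h1' hS b,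
        orderEmbOfFin_map_castLE hnm S hS hSt b']
      rcases eq_or_ne b b' with rfl | hne
      · rw [if_pos ⟨Finset.orderEmbOfFin_mem _ hS b, by simp⟩, Matrix.one_apply_eq]
      · rw [if_neg, Matrix.one_apply_ne hne]
        rintro ⟨-, hval⟩
        exact hne ((S.orderEmbOfFin hS).injective (Fin.ext (by simpa using hval)))
    -- (2,3)
    · rw [if_pos (Or.inl (hSm b))]
    -- (2,4)
    · rw [if_neg]
      rintro ⟨hmem, hval⟩
      have hin : Fin.castLEEmb hnm (Sᶜᶜ.orderEmbOfFin h1' b) ∈ S.map (Fin.castLEEmb hnm) :=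
        Finset.mem_map_of_mem _ (hSm b)
      have heq : Fin.castLEEmb hnm (Sᶜᶜ.orderEmbOfFin h1' b) =
          (S.map (Fin.castLEEmb hnm))ᶜ.orderEmbOfFin h4 d' := Fin.ext (by simpa using hval)
      rw [heq] at hin
      exact Finset.mem_compl.1 (Finset.orderEmbOfFin_mem _ h4 d') hin
    -- (3,1)
    · rw [if_neg]
      rintro ⟨h, -⟩
      exact hTcm a' h
    -- (3,2)
    · rfl
    -- (3,3)
    · rw [oe_congr (compl_compl T) h2' hT c',
        orderEmbOfFin_map_castLE hnm T hT hTt c]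
      rcases eq_or_ne c c' with rfl | hne
      · rw [if_pos ⟨Finset.orderEmbOfFin_mem _ hT c, by simp⟩, Matrix.one_apply_eq]
      · rw [if_neg, Matrix.one_apply_ne hne]
        rintro ⟨-, hval⟩
        exact hne (((T.orderEmbOfFin hT).injective (Fin.ext (by simpa using hval))).symm)
    -- (3,4)
    · rfl
    -- (4,1)
    · rw [if_neg]
      rintro ⟨h, -⟩
      exact hTcm a' h
    -- (4,2)
    · rfl
    -- (4,3)
    · rw [oe_congr (compl_compl T) h2' hT c']
      rw [if_neg]
      rintro ⟨hmem, hval⟩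
      have hin : Fin.castLEEmb hnm (T.orderEmbOfFin hT c') ∈ T.map (Fin.castLEEmb hnm) :=
        Finset.mem_map_of_mem _ (Finset.orderEmbOfFin_mem _ hT c')
      have heq : Fin.castLEEmb hnm (T.orderEmbOfFin hT c') =
          (T.map (Fin.castLEEmb hnm))ᶜ.orderEmbOfFin h3 d := Fin.ext (by simpa using hval)
      rw [heq] at hin
      exact Finset.mem_compl.1 (Finset.orderEmbOfFin_mem _ h3 d) hin
    -- (4,4)
    · rfl
  have hdet1 : ((NN A B S T).submatrix eRow eCol).det = A'.det * B'.det := by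
    rw [key1, Matrix.det_fromBlocks_zero₁₂, Matrix.det_fromBlocks_zero₁₂,
      Matrix.det_fromBlocks_zero₂₁, Matrix.det_one]
    ring
  have hsub : (NN A B S T).submatrix eRow eCol =
      ((NN A B S T).submatrix eRow eRow).submatrix id (eCol.trans eRow.symm) := by
    ext p q
    simp [Matrix.submatrix_apply]
  have hdet2 : (((NN A B S T).submatrix eRow eRow).submatrix id
      ⇑(eCol.trans eRow.symm)).det =
      (Equiv.Perm.sign (eCol.trans eRow.symm) : R) * (NN A B S T).det := by
    rw [Matrix.det_permute', Matrix.det_submatrix_equiv_self]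
  have hsign : Equiv.Perm.sign (eCol.trans eRow.symm) = (-1 : ℤˣ) ^ k := by
    have hassoc : eCol.trans eRow.symm =
        (midSwap (n - k) k (m - k)).trans (eColPack.trans eRow.symm) := by
      rw [heCol, Equiv.trans_assoc]
    rw [hassoc, ← Equiv.Perm.mul_def, map_mul, heRow, heColPack, Equiv.sumCongr_symm,
      Equiv.sumCongr_trans, Equiv.Perm.sign_sumCongr,
      sign_combo hnm S T hS hT h1 h1' h2 h2' hTt h3 hSt h4, sign_midSwap, one_mul]
  have hsq : (-1 : R) ^ k * (-1 : R) ^ k = 1 := by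
    rw [← pow_add]
    exact Even.neg_one_pow ⟨k, rfl⟩
  have hcast : ((Equiv.Perm.sign (eCol.trans eRow.symm) : ℤ) : R) = (-1 : R) ^ k := by
    rw [hsign]
    push_cast
    ring
  have hmain : A'.det * B'.det = (-1 : R) ^ k * (NN A B S T).det := by
    rw [← hcast, ← hdet2, ← hsub, hdet1]
  calc (NN A B S T).det = ((-1 : R) ^ k * (-1 : R) ^ k) * (NN A B S T).det := by
        rw [hsq, one_mul]
    _ = (-1 : R) ^ k * ((-1 : R) ^ k * (NN A B S T).det) := by ring
    _ = (-1 : R) ^ k * (A'.det * B'.det) := by rw [← hmain]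
    _ = (-1 : R) ^ k * A'.det * B'.det := by ring

lemma det_expand_inl_rows {n m : ℕ}
    (M : Matrix (Fin n ⊕ Fin m) (Fin n ⊕ Fin m) R)
    (u v : Fin n → (Fin n ⊕ Fin m → R))
    (h : ∀ i, M (Sum.inl i) = u i + v i) :
    M.det = ∑ S : Finset (Fin n),
      Matrix.det (Matrix.of (Sum.elim (fun i => if i ∈ S then v i else u i)
        (fun jj => M (Sum.inr jj)))) := by
  classical
  set g : (Fin n ⊕ Fin m) → Bool → (Fin n ⊕ Fin m → R) := fun p b =>
    Sum.elim (fun i => if b then v i else u i) (fun jj => if b then 0 else M (Sum.inr jj)) p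
    with hg
  have hM : M = Matrix.of fun p => ∑ b : Bool, g p b := by
    ext p q
    rcases p with i | jj
    · rw [Matrix.of_apply, Fintype.sum_bool]
      simp only [hg, Sum.elim_inl, if_true, if_false]
      rw [h i]
      simp [add_comm]
    · rw [Matrix.of_apply, Fintype.sum_bool]
      simp [hg]
  have step1 : M.det = ∑ r : (Fin n ⊕ Fin m) → Bool,
      Matrix.det (Matrix.of fun p => g p (r p)) := by
    rw [hM]
    exact (Matrix.detRowAlternating :
      ((Fin n ⊕ Fin m) → R) [⋀^(Fin n ⊕ Fin m)]→ₗ[R] R).toMultilinearMap.map_sum g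
  rw [step1]
  -- reindex over pairs of boolean functions
  rw [← Equiv.sum_comp (Equiv.sumArrowEquivProdArrow (Fin n) (Fin m) Bool).symm, Fintype.sum_prod_type]
  -- kill all terms where the second component is not constantly false
  have step2 : ∀ r1 : Fin n → Bool,
      (∑ r2 : Fin m → Bool, Matrix.det (Matrix.of fun p =>
        g p ((Equiv.sumArrowEquivProdArrow (Fin n) (Fin m) Bool).symm (r1, r2) p))) =
      Matrix.det (Matrix.of fun p =>
        g p ((Equiv.sumArrowEquivProdArrow (Fin n) (Fin m) Bool).symm (r1, fun _ => false) p)) := by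
    intro r1
    apply Fintype.sum_eq_single
    intro r2 hr2
    have hex : ∃ jj, r2 jj = true := by
      by_contra hc
      push_neg at hc
      exact hr2 (funext fun jj => by simpa using hc jj)
    obtain ⟨jj, hjj⟩ := hex
    apply Matrix.det_eq_zero_of_row_eq_zero (Sum.inr jj)
    intro q
    simp [hg, Equiv.sumArrowEquivProdArrow, hjj]
  simp only [step2]
  -- reindex over finsets
  have hbij : Function.Bijective
      (fun (S : Finset (Fin n)) (i : Fin n) => decide (i ∈ S)) := by
    constructor
    · intro S1 S2 hSS
      ext i
      have := congrFun hSS i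
      simpa using this
    · intro r
      refine ⟨Finset.univ.filter (fun i => r i = true), ?_⟩
      funext i
      by_cases hi : r i = true <;> simp [hi]
  rw [← Fintype.sum_bijective _ hbij _ _ (fun S => rfl)]
  apply Finset.sum_congr rfl
  intro S _
  congr 1
  ext p q
  rcases p with i | jj
  · simp only [Matrix.of_apply, hg, Equiv.sumArrowEquivProdArrow, Equiv.coe_fn_symm_mk,
      Sum.elim_inl]
    by_cases hi : i ∈ S <;> simp [hi]
  · simp [hg, Equiv.sumArrowEquivProdArrow]

lemma det_expand_inl_cols {n m : ℕ}
    (M : Matrix (Fin n ⊕ Fin m) (Fin n ⊕ Fin m) R)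
    (u v : Fin n → (Fin n ⊕ Fin m → R))
    (h : ∀ j0 p, M p (Sum.inl j0) = u j0 p + v j0 p) :
    M.det = ∑ T : Finset (Fin n),
      Matrix.det (Matrix.of fun p q => Sum.elim
        (fun j0 => if j0 ∈ T then v j0 p else u j0 p)
        (fun kk => M p (Sum.inr kk)) q) := by
  rw [← Matrix.det_transpose M,
    det_expand_inl_rows (Matrix.transpose M) u v (fun j0 => funext fun p => h j0 p)]
  apply Finset.sum_congr rfl
  intro T _
  rw [← Matrix.det_transpose (Matrix.of (Sum.elim (fun i => if i ∈ T then v i else u i)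
    (fun jj => Matrix.transpose M (Sum.inr jj))))]
  congr 1
  ext p q
  rcases q with j0 | kk
  · by_cases hj : j0 ∈ T <;>
      simp [Matrix.transpose_apply, hj]
  · simp [Matrix.transpose_apply]

end BlockDetAux

open BlockDetAux


/-- **Block matrix determinant expansion.** For `A` an `n×n` matrix, `B` an `m×m` matrix
(`n ≤ m`) over a commutative ring, and `H = [[A, X], [Y, B]]` where `X` (resp. `Y`) has the
entries `x i` (resp. `y i`) on its main diagonal and zeros elsewhere,
`det H = Σ_{S,T ⊆ [n], |S|=|T|} (-1)^{|S|} det(A_{-S,-T}) det(B_{-T,-S}) x^S y^T`,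
where `A_{-S,-T}` deletes rows `S` and columns `T` and `B_{-T,-S}` deletes rows `T` and
columns `S` (as subsets of the first `n` indices of `B`). -/
theorem block_det_expansion {R : Type*} [CommRing R] {n m : ℕ} (hnm : n ≤ m)
    (A : Matrix (Fin n) (Fin n) R) (B : Matrix (Fin m) (Fin m) R)
    (x y : Fin n → R) :
    (Matrix.fromBlocks A
        (Matrix.of fun (i : Fin n) (j : Fin m) => if (i : ℕ) = (j : ℕ) then x i else 0)
        (Matrix.of fun (j : Fin m) (i : Fin n) => if (i : ℕ) = (j : ℕ) then y i else 0)
        B).det =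
      ∑ S : Finset (Fin n), ∑ T : Finset (Fin n),
        if hST : S.card = T.card then
          (-1 : R) ^ S.card *
            (A.submatrix
              (fun a : Fin (n - S.card) =>
                ((Sᶜ.orderIsoOfFin (by simp [Finset.card_compl])) a : Fin n))
              (fun a : Fin (n - S.card) =>
                ((Tᶜ.orderIsoOfFin (by simp [Finset.card_compl, hST])) a : Fin n))).det *
            (B.submatrix
              (fun a : Fin (m - T.card) =>
                (((T.map (Fin.castLEEmb hnm))ᶜ.orderIsoOfFin
                  (by simp [Finset.card_compl, Fin.castLEEmb])) a : Fin m))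
              (fun a : Fin (m - T.card) =>
                (((S.map (Fin.castLEEmb hnm))ᶜ.orderIsoOfFin
                  (by simp [Finset.card_compl, hST])) a : Fin m))).det *
            (∏ i ∈ S, x i) * (∏ j ∈ T, y j)
        else 0 := by
  classical
  rw [det_expand_inl_rows
    (Matrix.fromBlocks A
      (Matrix.of fun (i : Fin n) (j : Fin m) => if (i : ℕ) = (j : ℕ) then x i else 0)
      (Matrix.of fun (j : Fin m) (i : Fin n) => if (i : ℕ) = (j : ℕ) then y i else 0) B)
    (fun i => Sum.elim (A i) 0)
    (fun i => Sum.elim 0 (fun jj : Fin m => if (i : ℕ) = (jj : ℕ) then x i else 0))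
    (by
      intro i
      funext q
      rcases q with j0 | kk <;> simp [Matrix.fromBlocks])]
  apply Finset.sum_congr rfl
  intro S _
  rw [det_expand_inl_cols
    (Matrix.of (Sum.elim
      (fun i => if i ∈ S
        then (Sum.elim 0 (fun jj : Fin m => if (i : ℕ) = (jj : ℕ) then x i else 0))
        else Sum.elim (A i) 0)
      (fun jj => (Matrix.fromBlocks A
        (Matrix.of fun (i : Fin n) (j : Fin m) => if (i : ℕ) = (j : ℕ) then x i else 0)
        (Matrix.of fun (j : Fin m) (i : Fin n) => if (i : ℕ) = (j : ℕ) then y i else 0) B)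
        (Sum.inr jj))))
    (fun j0 => Sum.elim (fun i => if i ∈ S then 0 else A i j0) 0)
    (fun j0 => Sum.elim 0 (fun kk : Fin m => if (j0 : ℕ) = (kk : ℕ) then y j0 else 0))
    (by
      intro j0 p
      rcases p with i | kk
      · by_cases hi : i ∈ S <;> simp [hi]
      · simp [Matrix.fromBlocks])]
  apply Finset.sum_congr rfl
  intro T _
  set vrow : Fin n ⊕ Fin m → R :=
    Sum.elim (fun i => if i ∈ S then x i else 1) (fun _ => 1) with hvrow
  set wcol : Fin n ⊕ Fin m → R :=
    Sum.elim (fun j0 => if j0 ∈ T then y j0 else 1) (fun _ => 1) with hwcol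
  have hprodv : (∏ p : Fin n ⊕ Fin m, vrow p) = ∏ i ∈ S, x i := by
    rw [Fintype.prod_sum_type]
    simp [hvrow, Finset.prod_ite_mem, Finset.univ_inter]
  have hprodw : (∏ p : Fin n ⊕ Fin m, wcol p) = ∏ j0 ∈ T, y j0 := by
    rw [Fintype.prod_sum_type]
    simp [hwcol, Finset.prod_ite_mem, Finset.univ_inter]
  trans (Matrix.of (fun p q => vrow p *
      (Matrix.of fun p' q' => wcol q' * NN A B S T p' q') p q)).det
  · congr 1
    ext p q
    rcases p with i | kk <;> rcases q with j0 | ll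
    · by_cases hi : i ∈ S <;> by_cases hj : j0 ∈ T <;>
        simp [hvrow, hwcol, NN_ll, hi, hj]
    · by_cases hi : i ∈ S <;>
        simp [hvrow, hwcol, NN_lr, hi, mul_ite]
    · by_cases hj : j0 ∈ T <;>
        simp [hvrow, hwcol, NN_rl, hj, mul_ite]
    · simp [hvrow, hwcol, NN_rr, Matrix.fromBlocks]
  · rw [Matrix.det_mul_column, Matrix.det_mul_row, hprodv, hprodw]
    by_cases hST : S.card = T.card
    · rw [dif_pos hST,
        det_NN_eq hnm A B S T (l := n - S.card) (j := m - T.card) rfl hST.symm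
          (by simp [Finset.card_compl])
          (by simp [Finset.card_compl, hST])
          (by simp [Finset.card_compl])
          (by simp [Finset.card_compl, hST])]
      simp only [Finset.coe_orderIsoOfFin_apply]
      ring
    · rw [dif_neg hST, det_NN_zero hnm A B hST]
      ring
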